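/- arXiv:2011.08427 — 2 statements merged into one kernel-verified Lean document; each statement's English description precedes it below -/
import Mathlib

section
/- Let G be a commutative group, let Z, S : ℂ → G and ρ ∈ ℂ satisfy the functional equation Z(2ρ − s) = Z(s)·S(s) for all s ∈ ℂ. Let a : ℤ → ℤ be finitely supported, C ∈ {1,−1} and D ∈ ℤ with a(D−k) = C·a(k) for all k ∈ ℤ. Then for all s ∈ ℂ, (T_a Z)(D + 2ρ − s)^C = (T_a Z)(s) · (T_a S)(s). -/
/-- Let `G` be a commutative group, `Z, S : ℂ → G` and `ρ ∈ ℂ` satisfy the functional equation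
`Z(2ρ − s) = Z(s)·S(s)` for all `s`. Let `a : ℤ → ℤ` be finitely supported, `C ∈ {1,−1}` and
`D ∈ ℤ` with `a(D−k) = C·a(k)` for all `k`. Then for all `s ∈ ℂ`,
`(T_a Z)(D + 2ρ − s)^C = (T_a Z)(s) · (T_a S)(s)`, where
`(T_a F)(s) = ∏_k F(s−k)^{a(k)}`. -/
theorem stmt2 {G : Type*} [CommGroup G] (Z S : ℂ → G) (ρ : ℂ)
    (hfe : ∀ s : ℂ, Z (2 * ρ - s) = Z s * S s)
    (a : ℤ → ℤ) (ha : (Function.support a).Finite)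
    (C : ℤ) (hC : C = 1 ∨ C = -1) (D : ℤ)
    (haut : ∀ k : ℤ, a (D - k) = C * a k) (s : ℂ) :
    (∏ᶠ k : ℤ, Z ((D : ℂ) + 2 * ρ - s - (k : ℂ)) ^ a k) ^ C
      = (∏ᶠ k : ℤ, Z (s - (k : ℂ)) ^ a k) * ∏ᶠ k : ℤ, S (s - (k : ℂ)) ^ a k := by
  have hCC : C * C = 1 := by rcases hC with h | h <;> simp [h]
  -- the involutive equiv k ↦ D - k
  let e : ℤ ≃ ℤ := Function.Involutive.toPerm (fun k => D - k) (fun k => by ring)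
  have step1 : (∏ᶠ k : ℤ, Z ((D : ℂ) + 2 * ρ - s - (k : ℂ)) ^ a k)
      = ∏ᶠ k : ℤ, (Z (s - (k : ℂ)) * S (s - (k : ℂ))) ^ (C * a k) := by
    rw [← finprod_comp_equiv e]
    apply finprod_congr
    intro k
    have hk : (e k : ℤ) = D - k := rfl
    rw [hk, haut k]
    have harg : (D : ℂ) + 2 * ρ - s - ((D - k : ℤ) : ℂ) = 2 * ρ - (s - (k : ℂ)) := by
      push_cast; ring
    rw [harg, hfe]
  have hzpow : ∀ f : ℤ → G, (∏ᶠ k : ℤ, f k) ^ C = ∏ᶠ k : ℤ, (f k) ^ C := by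
    intro f
    rcases hC with h | h
    · simp [h]
    · simp only [h, zpow_neg, zpow_one, ← finprod_inv_distrib]
  rw [step1, hzpow]
  have step2 : ∀ k : ℤ, ((Z (s - (k : ℂ)) * S (s - (k : ℂ))) ^ (C * a k)) ^ C
      = Z (s - (k : ℂ)) ^ a k * S (s - (k : ℂ)) ^ a k := by
    intro k
    rw [← zpow_mul, mul_comm C (a k), mul_assoc, hCC, mul_one, mul_zpow]
  rw [finprod_congr step2]
  refine finprod_mul_distrib ?_ ?_ <;>
    exact ha.subset (fun k hk => by
      simp only [Function.mem_mulSupport] at hk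
      intro h0
      exact hk (by simp [h0]))
end

section
/- Let r ≥ 1 and let F₁, …, F_r : ℂ → ℂˣ be nowhere-vanishing functions satisfying the ladder relations F_j(s) = F_{j−1}(s) · F_j(s+1) for all s ∈ ℂ and 2 ≤ j ≤ r, and F₁(s+1) = −F₁(s) for all s ∈ ℂ. Let f_r ∈ ℤ[x,x⁻¹] be the Laurent polynomial f_r(x) = (1 − x⁻¹)^r. Then for all s ∈ ℂ, (T_{f_r} F_r)(s) = −1. -/
open LaurentPolynomial
open scoped LaurentPolynomial

/-- The coefficient of `x^k` in a Laurent polynomial `f = ∑ₖ a(k) xᵏ ∈ ℤ[x,x⁻¹]`. -/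
noncomputable def coeffZ (f : ℤ[T;T⁻¹]) (k : ℤ) : ℤ := AddMonoidAlgebra.coeff f k

/-- The twisted function `(T_f F)(s) = ∏ₖ F(s−k)^{a(k)}` where `a` is the coefficient function
of the Laurent polynomial `f`. -/
noncomputable def Tw (f : ℤ[T;T⁻¹]) (F : ℂ → ℂˣ) (s : ℂ) : ℂˣ :=
  ∏ᶠ k : ℤ, F (s - (k : ℂ)) ^ coeffZ f k

lemma coeffZ_one (k : ℤ) : coeffZ 1 k = if k = 0 then 1 else 0 := by
  rw [show (1 : ℤ[T;T⁻¹]) = T 0 from T_zero.symm]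
  show (T 0 : ℤ[T;T⁻¹]).coeff k = _
  rw [T_apply]
  simp [eq_comm]

lemma Tw_one (F : ℂ → ℂˣ) (s : ℂ) : Tw 1 F s = F s := by
  unfold Tw
  rw [finprod_eq_single _ (0 : ℤ)]
  · rw [coeffZ_one, if_pos rfl, zpow_one]
    norm_num
  · intro k hk
    rw [coeffZ_one, if_neg hk, zpow_zero]

lemma mulSupport_fin (f : ℤ[T;T⁻¹]) (u : ℤ → ℂˣ) :
    (Function.mulSupport fun k => u k ^ coeffZ f k).Finite := by
  apply Set.Finite.subset f.coeff.support.finite_toSet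
  intro k hk
  simp only [Function.mem_mulSupport] at hk
  simp only [Finset.coe_sort_coe, Finset.mem_coe, Finsupp.mem_support_iff]
  intro h
  exact hk (by rw [show coeffZ f k = f.coeff k from rfl, h, zpow_zero])

lemma Tw_mul_key (f : ℤ[T;T⁻¹]) (F : ℂ → ℂˣ) (s : ℂ) :
    Tw (f * (1 - T (-1))) F s = Tw f (fun t => F t * (F (t + 1))⁻¹) s := by
  have hcoeff : ∀ k : ℤ, coeffZ (f * (1 - T (-1))) k = coeffZ f k - coeffZ f (k + 1) := by
    intro k
    have h0 : f * (1 - T (-1)) = f - f * T (-1) := by ring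
    have hT : coeffZ (f * T (-1)) k = coeffZ f (k + 1) := by
      have h := AddMonoidAlgebra.coeff_mul_single_apply f (1 : ℤ) (-1 : ℤ) k
      rw [mul_one, neg_neg] at h
      exact h
    rw [h0]
    calc coeffZ (f - (f * T (-1) : ℤ[T;T⁻¹])) k
        = coeffZ f k - coeffZ (f * T (-1)) k := by unfold coeffZ; rw [AddMonoidAlgebra.coeff_sub, Finsupp.sub_apply]
      _ = coeffZ f k - coeffZ f (k + 1) := by rw [hT]
  set A : ℤ → ℂˣ := fun k => F (s - (k : ℂ)) ^ coeffZ f k with hAdef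
  set C : ℤ → ℂˣ := fun k => F (s + 1 - (k : ℂ)) ^ coeffZ f k with hCdef
  have hA : (Function.mulSupport A).Finite := mulSupport_fin f _
  have hC : (Function.mulSupport C).Finite := mulSupport_fin f _
  have hB : (Function.mulSupport fun k : ℤ => C (k + 1)).Finite := by
    rw [show (fun k : ℤ => C (k + 1)) = C ∘ (Equiv.addRight (1 : ℤ)) from rfl,
      Function.mulSupport_comp_eq_preimage]
    exact hC.preimage ((Equiv.addRight (1 : ℤ)).injective.injOn)
  have hB' : (Function.mulSupport fun k : ℤ => (C (k + 1))⁻¹).Finite := by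
    rwa [Function.mulSupport_fun_inv]
  have hC' : (Function.mulSupport fun k : ℤ => (C k)⁻¹).Finite := by
    rwa [Function.mulSupport_fun_inv]
  have hBC : (∏ᶠ k : ℤ, C (k + 1)) = ∏ᶠ k : ℤ, C k :=
    finprod_comp_equiv (Equiv.addRight (1 : ℤ))
  calc Tw (f * (1 - T (-1))) F s
      = ∏ᶠ k : ℤ, A k * (C (k + 1))⁻¹ := by
        unfold Tw
        apply finprod_congr
        intro k
        rw [hcoeff k, zpow_sub, hAdef, hCdef]
        congr 3
        push_cast; ring_nf
    _ = (∏ᶠ k : ℤ, A k) * ∏ᶠ k : ℤ, (C (k + 1))⁻¹ := finprod_mul_distrib hA hB'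
    _ = (∏ᶠ k : ℤ, A k) * (∏ᶠ k : ℤ, C (k + 1))⁻¹ := by rw [finprod_inv_distrib]
    _ = (∏ᶠ k : ℤ, A k) * (∏ᶠ k : ℤ, C k)⁻¹ := by rw [hBC]
    _ = (∏ᶠ k : ℤ, A k) * ∏ᶠ k : ℤ, (C k)⁻¹ := by rw [finprod_inv_distrib]
    _ = ∏ᶠ k : ℤ, A k * (C k)⁻¹ := (finprod_mul_distrib hA hC').symm
    _ = Tw f (fun t => F t * (F (t + 1))⁻¹) s := by
        unfold Tw
        apply finprod_congr
        intro k
        rw [hAdef, hCdef]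
        show F (s - (k : ℂ)) ^ coeffZ f k * (F (s + 1 - (k : ℂ)) ^ coeffZ f k)⁻¹ = _
        rw [mul_zpow, inv_zpow]
        congr 3
        ring_nf

/-- Let `r ≥ 1` and let `F₁, …, F_r : ℂ → ℂˣ` be nowhere-vanishing functions satisfying the
ladder relations `F_j(s) = F_{j−1}(s)·F_j(s+1)` for all `s ∈ ℂ` and `2 ≤ j ≤ r`, and
`F₁(s+1) = −F₁(s)` for all `s ∈ ℂ`. Let `f_r(x) = (1 − x⁻¹)^r ∈ ℤ[x,x⁻¹]`. Then for all
`s ∈ ℂ`, `(T_{f_r} F_r)(s) = −1`. -/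
theorem stmt4 (r : ℕ) (hr : 1 ≤ r) (F : ℕ → ℂ → ℂˣ)
    (hlad : ∀ j : ℕ, 2 ≤ j → j ≤ r → ∀ s : ℂ, F j s = F (j - 1) s * F j (s + 1))
    (hF1 : ∀ s : ℂ, F 1 (s + 1) = -F 1 s) (s : ℂ) :
    Tw ((1 - T (-1)) ^ r) (F r) s = -1 := by
  have key : ∀ j : ℕ, 1 ≤ j → j ≤ r → ∀ t : ℂ, Tw ((1 - T (-1)) ^ j) (F j) t = -1 := by
    intro j hj1
    induction j, hj1 using Nat.le_induction with
    | base =>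
      intro _ t
      rw [pow_one, show (1 - T (-1) : ℤ[T;T⁻¹]) = 1 * (1 - T (-1)) by rw [one_mul],
        Tw_mul_key, Tw_one, hF1 t]
      rw [← Units.val_inj]
      have h := (F 1 t).ne_zero
      push_cast
      field_simp
    | succ j hj ih =>
      intro hjr t
      rw [pow_succ, Tw_mul_key]
      have heq : (fun u => F (j + 1) u * (F (j + 1) (u + 1))⁻¹) = F j := by
        funext u
        have h := hlad (j + 1) (by omega) hjr u
        simp only [Nat.add_sub_cancel] at h
        rw [h]; group
      rw [heq]
      exact ih (by omega) t
  exact key r hr le_rfl s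
end
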